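/- Let n ≥ 1 and let s ∈ W_n be any monomial (word in the letters a_1,…,a_n, a_1*,…,a_n*). Then ‡ s s* ‡ − s s* ∈ Σ², where ‡ s s* ‡ denotes the anti-normal ordering of the monomial s s*. -/

import Mathlib

open scoped ComplexOrder

noncomputable section

/-- The Weyl algebra `W_n`: a complex `*`-algebra generated by `a 1, …, a n` and their
adjoints, satisfying the canonical commutation relations, in which the normally ordered
monomials `(a*)^s a^t` form a basis (this pins the algebra down up to `*`-isomorphism). -/
structure WeylAlgebra (n : ℕ) where
  carrier : Type
  [ring : Ring carrier]
  [alg : Algebra ℂ carrier]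
  [starRing : StarRing carrier]
  [starModule : StarModule ℂ carrier]
  a : Fin n → carrier
  comm_aa : ∀ i j, a i * a j = a j * a i
  comm_ss : ∀ i j, star (a i) * star (a j) = star (a j) * star (a i)
  ccr : ∀ i j : Fin n, a i * star (a j) - star (a j) * a i = if i = j then 1 else 0
  basis : Module.Basis ((Fin n → ℕ) × (Fin n → ℕ)) ℂ carrier
  basis_eq : ∀ st : (Fin n → ℕ) × (Fin n → ℕ),
    basis st = (List.ofFn fun i => star (a i) ^ st.1 i).prod *
               (List.ofFn fun i => (a i) ^ st.2 i).prod

attribute [instance] WeylAlgebra.ring WeylAlgebra.alg WeylAlgebra.starRing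
  WeylAlgebra.starModule

namespace WeylAlgebra

variable {n : ℕ} (W : WeylAlgebra n)

/-- The monomial `a^t = ∏ i, (a i)^(t i)`. -/
def amon (t : Fin n → ℕ) : W.carrier := (List.ofFn fun i => W.a i ^ t i).prod

/-- The normally ordered monomial `(a*)^s a^t`. -/
def nmon (s t : Fin n → ℕ) : W.carrier :=
  (List.ofFn fun i => star (W.a i) ^ s i).prod * (List.ofFn fun i => W.a i ^ t i).prod

/-- The `l₁`-norm of the coefficients of the (unique) normal form of `p`. -/
def l1 (p : W.carrier) : ℝ := (W.basis.repr p).sum fun _ c => ‖c‖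

/-- The degree of `p`: the maximal `‖s‖₁ + ‖t‖₁` over monomials appearing in the normal
form of `p`. -/
def deg (p : W.carrier) : ℕ :=
  (W.basis.repr p).support.sup fun st => (∑ i, st.1 i) + (∑ i, st.2 i)

/-- `p` is a sum of squares, i.e. `p ∈ Σ²`. -/
def IsSOS (p : W.carrier) : Prop :=
  ∃ (N : ℕ) (f : Fin N → W.carrier), p = ∑ i, star (f i) * f i

/-- `p ∈ Σ²_k`: `p` is a sum of squares of elements of degree at most `k`. -/
def IsSOSdeg (k : ℕ) (p : W.carrier) : Prop :=
  ∃ (N : ℕ) (f : Fin N → W.carrier), (∀ i, W.deg (f i) ≤ k) ∧ p = ∑ i, star (f i) * f i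

/-- The element `g^r_c = ∑_{‖t‖₁ ≤ r} (n-1)!/(c^{‖t‖₁} (n+‖t‖₁-1)!) • a^t (a^t)*`. -/
def gpoly (c : ℝ) (r : ℕ) : W.carrier :=
  ∑ t ∈ (Fintype.piFinset fun _ : Fin n => Finset.range (r + 1)).filter
      (fun t => ∑ i, t i ≤ r),
    ((Nat.factorial (n - 1) : ℂ) /
        ((c : ℂ) ^ (∑ i, t i) * (Nat.factorial (n + (∑ i, t i) - 1) : ℂ))) •
      (W.amon t * star (W.amon t))

/-- The value in `W` of a single letter (`Sum.inl i ↦ a i`, `Sum.inr i ↦ (a i)*`). -/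
def letterVal : Fin n ⊕ Fin n → W.carrier
  | Sum.inl i => W.a i
  | Sum.inr i => star (W.a i)

/-- The value in `W` of a word (monomial) in the letters `a_1,…,a_n,a_1*,…,a_n*`. -/
def wordVal (w : List (Fin n ⊕ Fin n)) : W.carrier := (w.map W.letterVal).prod

end WeylAlgebra

/-- The domain of the Schrödinger representation: finitely supported functions
`ℕ^n → ℂ`. -/
abbrev DSpace (n : ℕ) := (Fin n → ℕ) →₀ ℂ

/-- The number basis vector `e_m`. -/
def eVec {n : ℕ} (m : Fin n → ℕ) : DSpace n := Finsupp.single m 1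

/-- The inner product `⟨f, g⟩ = ∑_m conj (f m) * g m` on `DSpace n`
(antilinear in the first argument). -/
def innerD {n : ℕ} (f g : DSpace n) : ℂ := f.sum fun m c => (starRingEnd ℂ) c * g m

/-- The Schrödinger (Fock) representation of the Weyl algebra `W` on `DSpace n`,
specified by its action on the number basis. -/
structure Schrodinger {n : ℕ} (W : WeylAlgebra n) where
  rep : W.carrier →ₐ[ℂ] Module.End ℂ (DSpace n)
  rep_a : ∀ (i : Fin n) (m : Fin n → ℕ),
    rep (W.a i) (eVec m) =
      (Real.sqrt (m i) : ℂ) • eVec (Function.update m i (m i - 1))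
  rep_astar : ∀ (i : Fin n) (m : Fin n → ℕ),
    rep (star (W.a i)) (eVec m) =
      (Real.sqrt (m i + 1) : ℂ) • eVec (Function.update m i (m i + 1))

namespace Schrodinger

variable {n : ℕ} {W : WeylAlgebra n} (S : Schrodinger W)

/-- `π(p) ≥ 0`: the quadratic form of `π(p)` is nonnegative on the domain. -/
def PiNonneg (p : W.carrier) : Prop := ∀ φ : DSpace n, 0 ≤ innerD φ (S.rep p φ)

/-- The set of energies `⟨φ, π(p) φ⟩` over normalized `φ` in the domain. -/
def energySet (p : W.carrier) : Set ℝ :=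
  { x | ∃ φ : DSpace n, innerD φ φ = 1 ∧ (innerD φ (S.rep p φ)).re = x }

/-- `λ_inf(p)`, the infimum of `⟨φ, π(p) φ⟩` over normalized `φ`. -/
def lambdaInf (p : W.carrier) : ℝ := sInf (S.energySet p)

end Schrodinger

namespace WeylAlgebra

variable {n : ℕ} (W : WeylAlgebra n)

lemma isSOS_zero : W.IsSOS 0 := ⟨0, fun i => 0, by simp⟩

lemma IsSOS.add {p q : W.carrier} (hp : W.IsSOS p) (hq : W.IsSOS q) :
    W.IsSOS (p + q) := by
  obtain ⟨N, f, rfl⟩ := hp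
  obtain ⟨M, g, rfl⟩ := hq
  refine ⟨N + M, Fin.append f g, ?_⟩
  rw [Fin.sum_univ_add]
  simp [Fin.append_left, Fin.append_right]

lemma IsSOS.conj {p : W.carrier} (hp : W.IsSOS p) (g : W.carrier) :
    W.IsSOS (g * p * star g) := by
  obtain ⟨N, f, rfl⟩ := hp
  refine ⟨N, fun i => f i * star g, ?_⟩
  rw [Finset.mul_sum, Finset.sum_mul]
  refine Finset.sum_congr rfl fun i _ => ?_
  rw [star_mul, star_star]
  simp [mul_assoc]

lemma isSOS_gen (c : ℝ) (hc : 0 ≤ c) (f : W.carrier) :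
    W.IsSOS ((c : ℂ) • (star f * f)) := by
  refine ⟨1, fun _ => (Real.sqrt c : ℂ) • f, ?_⟩
  rw [Fin.sum_univ_one, star_smul, smul_mul_smul_comm]
  congr 1
  rw [Complex.star_def, Complex.conj_ofReal]
  norm_cast
  rw [Real.mul_self_sqrt hc]

end WeylAlgebra
section ListAux

variable {M : Type*} [Monoid M] {ι : Type*}

lemma list_prod_mul (l : List ι) (f g : ι → M)
    (h : ∀ i j, Commute (g i) (f j)) :
    (l.map fun i => f i * g i).prod = (l.map f).prod * (l.map g).prod := by
  induction l with
  | nil => simp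
  | cons i l ih =>
    have hc : Commute (g i) ((l.map f).prod) :=
      Commute.list_prod_right _ _ (by
        intro x hx
        obtain ⟨j, _, rfl⟩ := List.mem_map.mp hx
        exact h i j)
    simp only [List.map_cons, List.prod_cons, ih]
    rw [mul_assoc, ← mul_assoc (g i), hc.eq, mul_assoc, mul_assoc]

lemma list_prod_ite [DecidableEq ι] (l : List ι) (i : ι) (x : M)
    (h : i ∈ l) (hl : l.Nodup) :
    (l.map fun j => if j = i then x else 1).prod = x := by
  induction l with
  | nil => simp at h
  | cons b l ih =>
    simp only [List.map_cons, List.prod_cons]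
    rcases List.mem_cons.mp h with rfl | h'
    · rw [if_pos rfl]
      have h1 : (l.map fun j' => if j' = i then x else 1).prod = 1 := by
        apply List.prod_eq_one
        intro y hy
        obtain ⟨j', hj', rfl⟩ := List.mem_map.mp hy
        rw [if_neg]
        rintro rfl
        exact (List.nodup_cons.mp hl).1 hj'
      rw [h1, mul_one]
    · have hji : b ≠ i := by
        rintro rfl
        exact (List.nodup_cons.mp hl).1 h'
      rw [if_neg hji, one_mul, ih h' (List.nodup_cons.mp hl).2]

end ListAux

namespace WeylAlgebra

variable {n : ℕ} (W : WeylAlgebra n)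

lemma commute_aa (i j : Fin n) : Commute (W.a i) (W.a j) := W.comm_aa i j

lemma commute_as {i j : Fin n} (h : i ≠ j) : Commute (W.a i) (star (W.a j)) := by
  have := W.ccr i j
  rw [if_neg h] at this
  exact sub_eq_zero.mp this

lemma a_mul_star (i : Fin n) :
    W.a i * star (W.a i) = star (W.a i) * W.a i + 1 := by
  have := W.ccr i i
  rw [if_pos rfl] at this
  rw [eq_add_of_sub_eq this, add_comm]

lemma amon_add (s t : Fin n → ℕ) :
    W.amon (fun j => s j + t j) = W.amon s * W.amon t := by
  unfold amon
  simp only [List.ofFn_eq_map]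
  rw [← list_prod_mul _ _ _ fun i j => ((W.commute_aa i j).pow_pow _ _)]
  simp only [pow_add]

lemma amon_single (i : Fin n) (k : ℕ) :
    W.amon (fun j => if j = i then k else 0) = W.a i ^ k := by
  unfold amon
  rw [List.ofFn_eq_map]
  have : (fun j => W.a j ^ if j = i then k else 0)
      = fun j => if j = i then W.a i ^ k else 1 := by
    funext j
    by_cases h : j = i <;> simp [h]
  rw [this, list_prod_ite _ i _ (List.mem_finRange i) (List.nodup_finRange n)]

lemma amon_zero : W.amon (fun _ => 0) = 1 := by
  unfold amon
  simp

lemma commute_amon_a (t : Fin n → ℕ) (i : Fin n) : Commute (W.amon t) (W.a i) := by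
  apply Commute.list_prod_left
  intro x hx
  obtain ⟨j, rfl⟩ := List.mem_ofFn.mp hx
  exact (W.commute_aa j i).pow_left _

lemma commute_amon_as {t : Fin n → ℕ} (i : Fin n) (ht : t i = 0) :
    Commute (W.amon t) (star (W.a i)) := by
  apply Commute.list_prod_left
  intro x hx
  obtain ⟨j, rfl⟩ := List.mem_ofFn.mp hx
  by_cases h : j = i
  · subst h
    show Commute (W.a j ^ t j) (star (W.a j))
    rw [ht, pow_zero]
    exact Commute.one_left _
  · exact (W.commute_as h).pow_left _

lemma amon_decomp (r : Fin n → ℕ) (i : Fin n) :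
    W.amon r = W.amon (Function.update r i 0) * W.a i ^ (r i) := by
  rw [← W.amon_single i (r i), ← W.amon_add]
  congr 1
  funext j
  by_cases h : j = i
  · subst h; simp
  · simp [Function.update_of_ne h, h]

end WeylAlgebra
namespace WeylAlgebra

variable {n : ℕ} (W : WeylAlgebra n)

lemma lemA (i : Fin n) (q : ℕ) :
    W.a i * star (W.a i) ^ (q + 1)
      = star (W.a i) ^ (q + 1) * W.a i + ((q : ℂ) + 1) • star (W.a i) ^ q := by
  induction q with
  | zero => simpa using W.a_mul_star i
  | succ q ih =>
    calc W.a i * star (W.a i) ^ (q + 1 + 1)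
        = (W.a i * star (W.a i) ^ (q + 1)) * star (W.a i) := by
          rw [pow_succ, ← mul_assoc]
      _ = (star (W.a i) ^ (q + 1) * W.a i + ((q : ℂ) + 1) • star (W.a i) ^ q)
            * star (W.a i) := by rw [ih]
      _ = star (W.a i) ^ (q + 1) * (W.a i * star (W.a i))
            + ((q : ℂ) + 1) • star (W.a i) ^ (q + 1) := by
          rw [add_mul, smul_mul_assoc, mul_assoc, ← pow_succ]
      _ = star (W.a i) ^ (q + 1) * (star (W.a i) * W.a i) + star (W.a i) ^ (q + 1)
            + ((q : ℂ) + 1) • star (W.a i) ^ (q + 1) := by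
          rw [W.a_mul_star i, mul_add, mul_one]
      _ = star (W.a i) ^ (q + 1 + 1) * W.a i + (((q + 1 : ℕ) : ℂ) + 1) • star (W.a i) ^ (q + 1) := by
          rw [← mul_assoc, ← pow_succ]
          push_cast
          module

lemma lemB (i : Fin n) (q : ℕ) :
    W.a i ^ (q + 1) * star (W.a i)
      = star (W.a i) * W.a i ^ (q + 1) + ((q : ℂ) + 1) • W.a i ^ q := by
  have h := congrArg star (W.lemA i q)
  simp only [star_mul, star_add, star_smul, star_pow, star_star, star_natCast,
    star_one, RingHom.id_apply] at h
  exact h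

end WeylAlgebra
namespace WeylAlgebra

variable {n : ℕ} (W : WeylAlgebra n)

lemma mid (i : Fin n) (x y : W.carrier) :
    x * W.a i * (star (W.a i) * y)
      = x * star (W.a i) * (W.a i * y) + x * y := by
  calc x * W.a i * (star (W.a i) * y)
      = x * ((W.a i * star (W.a i)) * y) := by simp only [mul_assoc]
    _ = x * ((star (W.a i) * W.a i + 1) * y) := by rw [W.a_mul_star i]
    _ = x * star (W.a i) * (W.a i * y) + x * y := by
        simp only [add_mul, one_mul, mul_add, mul_assoc]

lemma coreS (i : Fin n) (q : ℕ) :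
    W.a i * (star (W.a i) ^ (q + 1) * W.a i ^ (q + 1)) * star (W.a i)
      = star (W.a i) ^ (q + 2) * W.a i ^ (q + 2)
        + ((2 * (q + 1) + 1 : ℕ) : ℂ) • (star (W.a i) ^ (q + 1) * W.a i ^ (q + 1))
        + (((q + 1 : ℕ) : ℂ) * ((q + 1 : ℕ) : ℂ)) • (star (W.a i) ^ q * W.a i ^ q) := by
  calc W.a i * (star (W.a i) ^ (q + 1) * W.a i ^ (q + 1)) * star (W.a i)
      = (W.a i * star (W.a i) ^ (q + 1)) * (W.a i ^ (q + 1) * star (W.a i)) := by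
        simp only [mul_assoc]
    _ = (star (W.a i) ^ (q + 1) * W.a i + ((q : ℂ) + 1) • star (W.a i) ^ q)
        * (star (W.a i) * W.a i ^ (q + 1) + ((q : ℂ) + 1) • W.a i ^ q) := by
        rw [W.lemA i q, W.lemB i q]
    _ = (star (W.a i) ^ (q + 1) * W.a i) * (star (W.a i) * W.a i ^ (q + 1))
        + ((q : ℂ) + 1) • (star (W.a i) ^ (q + 1) * (W.a i * W.a i ^ q))
        + ((q : ℂ) + 1) • ((star (W.a i) ^ q * star (W.a i)) * W.a i ^ (q + 1))
        + (((q : ℂ) + 1) * ((q : ℂ) + 1)) • (star (W.a i) ^ q * W.a i ^ q) := by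
        simp only [add_mul, mul_add, smul_mul_assoc, mul_smul_comm, smul_smul, mul_assoc]
        module
    _ = (star (W.a i) ^ (q + 1) * star (W.a i)) * (W.a i * W.a i ^ (q + 1))
        + star (W.a i) ^ (q + 1) * W.a i ^ (q + 1)
        + ((q : ℂ) + 1) • (star (W.a i) ^ (q + 1) * (W.a i * W.a i ^ q))
        + ((q : ℂ) + 1) • ((star (W.a i) ^ q * star (W.a i)) * W.a i ^ (q + 1))
        + (((q : ℂ) + 1) * ((q : ℂ) + 1)) • (star (W.a i) ^ q * W.a i ^ q) := by
        rw [W.mid i]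
    _ = star (W.a i) ^ (q + 2) * W.a i ^ (q + 2)
        + ((2 * (q + 1) + 1 : ℕ) : ℂ) • (star (W.a i) ^ (q + 1) * W.a i ^ (q + 1))
        + (((q + 1 : ℕ) : ℂ) * ((q + 1 : ℕ) : ℂ)) • (star (W.a i) ^ q * W.a i ^ q) := by
        rw [← pow_succ, ← pow_succ', ← pow_succ, ← pow_succ']
        push_cast
        module

/-- The set of generators `c • (a_i*)^q (a_i)^q`, `c ≥ 0`. -/
def ANgen (i : Fin n) : Set W.carrier :=
  {x | ∃ (c : ℝ) (q : ℕ), 0 ≤ c ∧ x = (c : ℂ) • (star (W.a i) ^ q * W.a i ^ q)}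

/-- The cone (additive submonoid) generated by these. -/
def ANcone (i : Fin n) : AddSubmonoid W.carrier := AddSubmonoid.closure (W.ANgen i)

lemma gen_mem (i : Fin n) {c : ℝ} (hc : 0 ≤ c) (q : ℕ) :
    (c : ℂ) • (star (W.a i) ^ q * W.a i ^ q) ∈ W.ANcone i :=
  AddSubmonoid.subset_closure ⟨c, q, hc, rfl⟩

lemma gen_mem_natmul (i : Fin n) {c : ℝ} (hc : 0 ≤ c) (m q : ℕ) :
    (c : ℂ) • ((m : ℂ) • (star (W.a i) ^ q * W.a i ^ q)) ∈ W.ANcone i := by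
  have h : (c : ℂ) • ((m : ℂ) • (star (W.a i) ^ q * W.a i ^ q))
      = ((c * m : ℝ) : ℂ) • (star (W.a i) ^ q * W.a i ^ q) := by
    rw [smul_smul]
    push_cast
    ring_nf
  rw [h]
  exact W.gen_mem i (mul_nonneg hc m.cast_nonneg) q

lemma conj_mem (i : Fin n) {x : W.carrier} (hx : x ∈ W.ANcone i) :
    W.a i * x * star (W.a i) ∈ W.ANcone i := by
  induction hx using AddSubmonoid.closure_induction with
  | mem x hx =>
    obtain ⟨c, q, hc, rfl⟩ := hx
    have hs : W.a i * ((c : ℂ) • (star (W.a i) ^ q * W.a i ^ q)) * star (W.a i)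
        = (c : ℂ) • (W.a i * (star (W.a i) ^ q * W.a i ^ q) * star (W.a i)) := by
      rw [mul_smul_comm, smul_mul_assoc]
    rw [hs]
    match q with
    | 0 =>
      have h0 : W.a i * (star (W.a i) ^ 0 * W.a i ^ 0) * star (W.a i)
          = star (W.a i) ^ 1 * W.a i ^ 1 + star (W.a i) ^ 0 * W.a i ^ 0 := by
        simp [W.a_mul_star i]
      rw [h0, smul_add]
      exact add_mem (W.gen_mem i hc 1) (W.gen_mem i hc 0)
    | q + 1 =>
      rw [W.coreS i q, smul_add, smul_add]
      refine add_mem (add_mem ?_ ?_) ?_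
      · exact W.gen_mem i hc (q + 2)
      · exact W.gen_mem_natmul i hc _ _
      · have h2 : (c : ℂ) • ((((q + 1 : ℕ) : ℂ) * ((q + 1 : ℕ) : ℂ)) • (star (W.a i) ^ q * W.a i ^ q))
            = (c : ℂ) • ((((q + 1) * (q + 1) : ℕ) : ℂ) • (star (W.a i) ^ q * W.a i ^ q)) := by
          push_cast
          ring_nf
        rw [h2]
        exact W.gen_mem_natmul i hc _ _
  | zero =>
    simp only [mul_zero, zero_mul]
    exact zero_mem _
  | add x y _ _ hx hy =>
    have : W.a i * (x + y) * star (W.a i)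
        = W.a i * x * star (W.a i) + W.a i * y * star (W.a i) := by
      rw [mul_add, add_mul]
    rw [this]
    exact add_mem hx hy

lemma diff_mem (i : Fin n) {x : W.carrier} (hx : x ∈ W.ANcone i) :
    W.a i * x * star (W.a i) - star (W.a i) * x * W.a i ∈ W.ANcone i := by
  induction hx using AddSubmonoid.closure_induction with
  | mem x hx =>
    obtain ⟨c, q, hc, rfl⟩ := hx
    have hs : W.a i * ((c : ℂ) • (star (W.a i) ^ q * W.a i ^ q)) * star (W.a i)
          - star (W.a i) * ((c : ℂ) • (star (W.a i) ^ q * W.a i ^ q)) * W.a i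
        = (c : ℂ) • (W.a i * (star (W.a i) ^ q * W.a i ^ q) * star (W.a i)
            - star (W.a i) ^ (q + 1) * W.a i ^ (q + 1)) := by
      rw [smul_sub, mul_smul_comm, smul_mul_assoc, mul_smul_comm, smul_mul_assoc]
      congr 2
      rw [pow_succ', pow_succ]
      simp only [mul_assoc]
    rw [hs]
    match q with
    | 0 =>
      have h0 : W.a i * (star (W.a i) ^ 0 * W.a i ^ 0) * star (W.a i)
            - star (W.a i) ^ 1 * W.a i ^ 1
          = star (W.a i) ^ 0 * W.a i ^ 0 := by
        simp [W.a_mul_star i]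
      rw [h0]
      exact W.gen_mem i hc 0
    | q + 1 =>
      rw [W.coreS i q]
      have h1 : star (W.a i) ^ (q + 2) * W.a i ^ (q + 2)
            + ((2 * (q + 1) + 1 : ℕ) : ℂ) • (star (W.a i) ^ (q + 1) * W.a i ^ (q + 1))
            + (((q + 1 : ℕ) : ℂ) * ((q + 1 : ℕ) : ℂ)) • (star (W.a i) ^ q * W.a i ^ q)
            - star (W.a i) ^ (q + 1 + 1) * W.a i ^ (q + 1 + 1)
          = ((2 * (q + 1) + 1 : ℕ) : ℂ) • (star (W.a i) ^ (q + 1) * W.a i ^ (q + 1))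
            + (((q + 1 : ℕ) : ℂ) * ((q + 1 : ℕ) : ℂ)) • (star (W.a i) ^ q * W.a i ^ q) := by
        module
      rw [h1, smul_add]
      refine add_mem (W.gen_mem_natmul i hc _ _) ?_
      have h2 : (c : ℂ) • ((((q + 1 : ℕ) : ℂ) * ((q + 1 : ℕ) : ℂ)) • (star (W.a i) ^ q * W.a i ^ q))
          = (c : ℂ) • ((((q + 1) * (q + 1) : ℕ) : ℂ) • (star (W.a i) ^ q * W.a i ^ q)) := by
        push_cast
        ring_nf
      rw [h2]
      exact W.gen_mem_natmul i hc _ _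
  | zero =>
    simp only [mul_zero, zero_mul, sub_zero]
    exact zero_mem _
  | add x y _ _ hx hy =>
    have : W.a i * (x + y) * star (W.a i) - star (W.a i) * (x + y) * W.a i
        = (W.a i * x * star (W.a i) - star (W.a i) * x * W.a i)
          + (W.a i * y * star (W.a i) - star (W.a i) * y * W.a i) := by
      rw [mul_add, add_mul, mul_add, add_mul]
      abel
    rw [this]
    exact add_mem hx hy

lemma pow_mem (i : Fin n) (k : ℕ) :
    W.a i ^ k * star (W.a i) ^ k ∈ W.ANcone i := by
  induction k with
  | zero => simpa using W.gen_mem i zero_le_one 0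
  | succ k ih =>
    have h : W.a i ^ (k + 1) * star (W.a i) ^ (k + 1)
        = W.a i * (W.a i ^ k * star (W.a i) ^ k) * star (W.a i) := by
      rw [pow_succ', pow_succ]
      simp only [mul_assoc]
    rw [h]
    exact W.conj_mem i ih

lemma cone_isSOS_conj (i : Fin n) {x : W.carrier} (hx : x ∈ W.ANcone i)
    (y : W.carrier) : W.IsSOS (y * x * star y) := by
  induction hx using AddSubmonoid.closure_induction with
  | mem x hx =>
    obtain ⟨c, q, hc, rfl⟩ := hx
    have h : y * ((c : ℂ) • (star (W.a i) ^ q * W.a i ^ q)) * star y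
        = (c : ℂ) • (star (W.a i ^ q * star y) * (W.a i ^ q * star y)) := by
      rw [mul_smul_comm, smul_mul_assoc]
      congr 1
      rw [star_mul, star_star, star_pow]
      simp only [mul_assoc]
    rw [h]
    exact W.isSOS_gen c hc _
  | zero => simpa using W.isSOS_zero
  | add x y' _ _ hx hy =>
    have h : y * (x + y') * star y = y * x * star y + y * y' * star y := by
      rw [mul_add, add_mul]
    rw [h]
    exact WeylAlgebra.IsSOS.add W hx hy

end WeylAlgebra
lemma sandwich {M : Type*} [Monoid M] (y z g h x : M)
    (h1 : g * y = y * g) (h2 : z * h = h * z) :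
    g * (y * x * z) * h = y * (g * x * h) * z := by
  calc g * (y * x * z) * h = g * y * (x * (z * h)) := by simp only [mul_assoc]
    _ = g * y * (x * (h * z)) := by rw [h2]
    _ = (g * y) * (x * h * z) := by simp only [mul_assoc]
    _ = (y * g) * (x * h * z) := by rw [h1]
    _ = y * (g * x * h) * z := by simp only [mul_assoc]

namespace WeylAlgebra

variable {n : ℕ} (W : WeylAlgebra n)

lemma key (i : Fin n) (r : Fin n → ℕ) :
    W.IsSOS (W.a i * (W.amon r * star (W.amon r)) * star (W.a i)
           - star (W.a i) * (W.amon r * star (W.amon r)) * W.a i) := by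
  set y := W.amon (Function.update r i 0) with hy
  have hy0 : (Function.update r i 0) i = 0 := Function.update_self i 0 r
  have hya : Commute y (W.a i) := W.commute_amon_a _ i
  have hyA : Commute y (star (W.a i)) := W.commute_amon_as i hy0
  have hysa : Commute (star y) (W.a i) := by
    have h := congrArg star hyA.eq
    simp only [star_mul, star_star] at h
    exact h.symm
  have hysA : Commute (star y) (star (W.a i)) := by
    have h := congrArg star hya.eq
    simp only [star_mul, star_star] at h
    exact h.symm
  have hP : W.amon r * star (W.amon r)
      = y * (W.a i ^ (r i) * star (W.a i) ^ (r i)) * star y := by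
    rw [W.amon_decomp r i, ← hy, star_mul, star_pow]
    simp only [mul_assoc]
  have key_eq : W.a i * (W.amon r * star (W.amon r)) * star (W.a i)
        - star (W.a i) * (W.amon r * star (W.amon r)) * W.a i
      = y * (W.a i * (W.a i ^ (r i) * star (W.a i) ^ (r i)) * star (W.a i)
           - star (W.a i) * (W.a i ^ (r i) * star (W.a i) ^ (r i)) * W.a i) * star y := by
    rw [hP, mul_sub, sub_mul]
    congr 1
    · exact sandwich y (star y) (W.a i) (star (W.a i)) _ hya.symm.eq hysA.eq
    · exact sandwich y (star y) (star (W.a i)) (W.a i) _ hyA.symm.eq hysa.eq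
  rw [key_eq]
  exact W.cone_isSOS_conj i (W.diff_mem i (W.pow_mem i (r i))) y

lemma wordVal_cons (ℓ : Fin n ⊕ Fin n) (u : List (Fin n ⊕ Fin n)) :
    W.wordVal (ℓ :: u) = W.letterVal ℓ * W.wordVal u := by
  simp [wordVal]

end WeylAlgebra

section BEqSum

variable {A B : Type*} [BEq A] [BEq B] [LawfulBEq A] [LawfulBEq B]

private lemma sum_beq_iff (x y : A ⊕ B) : (x == y) = true ↔ x = y := by
  cases x with
  | inl a => cases y with
    | inl b =>
      have h : (Sum.inl (β := B) a == Sum.inl b) = (a == b) := rfl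
      rw [h, beq_iff_eq, Sum.inl.injEq]
    | inr b =>
      have h : (Sum.inl a == Sum.inr b) = false := rfl
      simp [h]
  | inr a => cases y with
    | inl b =>
      have h : (Sum.inr a == Sum.inl b) = false := rfl
      simp [h]
    | inr b =>
      have h : (Sum.inr (α := A) a == Sum.inr b) = (a == b) := rfl
      rw [h, beq_iff_eq, Sum.inr.injEq]

private instance : LawfulBEq (A ⊕ B) where
  eq_of_beq h := (sum_beq_iff _ _).mp h
  rfl := (sum_beq_iff _ _).mpr rfl

end BEqSum

/-- For any monomial `s` (a word `w` in the letters `a_i, a_i*`),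
`‡ s s* ‡ − s s* ∈ Σ²`, where the anti-normal ordering `‡ s s* ‡` equals
`a^t (a^t)*` with `t i` the total number of occurrences of the letters `a_i, a_i*`
in `w`. -/
theorem antinormal_minus_word_sos {n : ℕ} (hn : 1 ≤ n) (W : WeylAlgebra n)
    (w : List (Fin n ⊕ Fin n)) :
    W.IsSOS
      (W.amon (fun i => w.count (Sum.inl i) + w.count (Sum.inr i)) *
        star (W.amon (fun i => w.count (Sum.inl i) + w.count (Sum.inr i))) -
       W.wordVal w * star (W.wordVal w)) := by
  induction w with
  | nil =>
    have h1 : W.amon (fun i => ([] : List (Fin n ⊕ Fin n)).count (Sum.inl i)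
        + ([] : List (Fin n ⊕ Fin n)).count (Sum.inr i)) = 1 := by
      simpa using W.amon_zero
    have h2 : W.wordVal [] = 1 := by simp [WeylAlgebra.wordVal]
    rw [h1, h2]
    simpa using W.isSOS_zero
  | cons ℓ u ih =>
    cases ℓ with
    | inl i =>
      have hA : W.amon (fun j => (Sum.inl i :: u).count (Sum.inl j)
            + (Sum.inl i :: u).count (Sum.inr j))
          = W.a i * W.amon (fun j => u.count (Sum.inl j) + u.count (Sum.inr j)) := by
        have hcnt : (fun j => (Sum.inl i :: u).count (Sum.inl j)
              + (Sum.inl i :: u).count (Sum.inr j))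
            = fun j => (if j = i then 1 else 0)
              + (u.count (Sum.inl j) + u.count (Sum.inr j)) := by
          funext j
          by_cases h : j = i
          · subst h
            rw [List.count_cons_self, List.count_cons_of_ne (by simp), if_pos rfl]
            omega
          · rw [List.count_cons_of_ne (by simp only [ne_eq, Sum.inl.injEq]; exact Ne.symm h),
              List.count_cons_of_ne (by simp), if_neg h]
            omega
        rw [hcnt, W.amon_add (fun j => if j = i then 1 else 0)
          (fun j => u.count (Sum.inl j) + u.count (Sum.inr j)), W.amon_single, pow_one]
      rw [hA, W.wordVal_cons]
      have hL : W.letterVal (Sum.inl i) = W.a i := rfl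
      rw [hL]
      set M := W.amon (fun j => u.count (Sum.inl j) + u.count (Sum.inr j))
      set U := W.wordVal u
      have hsplit : W.a i * M * star (W.a i * M) - W.a i * U * star (W.a i * U)
          = W.a i * (M * star M - U * star U) * star (W.a i) := by
        rw [star_mul, star_mul]
        noncomm_ring
      rw [hsplit]
      exact WeylAlgebra.IsSOS.conj W ih (W.a i)
    | inr i =>
      have hA : W.amon (fun j => (Sum.inr i :: u).count (Sum.inl j)
            + (Sum.inr i :: u).count (Sum.inr j))
          = W.a i * W.amon (fun j => u.count (Sum.inl j) + u.count (Sum.inr j)) := by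
        have hcnt : (fun j => (Sum.inr i :: u).count (Sum.inl j)
              + (Sum.inr i :: u).count (Sum.inr j))
            = fun j => (if j = i then 1 else 0)
              + (u.count (Sum.inl j) + u.count (Sum.inr j)) := by
          funext j
          by_cases h : j = i
          · subst h
            rw [List.count_cons_self, List.count_cons_of_ne (by simp), if_pos rfl]
            omega
          · rw [List.count_cons_of_ne (by simp),
              List.count_cons_of_ne (by simp only [ne_eq, Sum.inr.injEq]; exact Ne.symm h), if_neg h]
            omega
        rw [hcnt, W.amon_add (fun j => if j = i then 1 else 0)
          (fun j => u.count (Sum.inl j) + u.count (Sum.inr j)), W.amon_single, pow_one]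
      rw [hA, W.wordVal_cons]
      have hL : W.letterVal (Sum.inr i) = star (W.a i) := rfl
      rw [hL]
      set M := W.amon (fun j => u.count (Sum.inl j) + u.count (Sum.inr j))
      set U := W.wordVal u
      have hsplit : W.a i * M * star (W.a i * M)
            - star (W.a i) * U * star (star (W.a i) * U)
          = (W.a i * (M * star M) * star (W.a i)
              - star (W.a i) * (M * star M) * W.a i)
            + star (W.a i) * (M * star M - U * star U) * star (star (W.a i)) := by
        rw [star_mul, star_mul, star_star]
        noncomm_ring
      rw [hsplit]
      exact WeylAlgebra.IsSOS.add W (W.key i _) (WeylAlgebra.IsSOS.conj W ih (star (W.a i)))
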